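/- The blocks of the 4×4 Yang–Baxter matrix satisfy, for any two spectral parameters: (A(x) ± D(x))(A(x') ± D(x')) = (A(x') ± D(x'))(A(x) ± D(x)) and (A(x) ± D(x))(B(x') ± C(x')) = (A(x') ± D(x'))(B(x) ± C(x)), where the blocks at level r are given by the coproduct recursion; these identities hold for all r ≥ 1 and all x, x'. -/

import Mathlib

open Matrix Kronecker

/-- Index type for `2^(n+1) × 2^(n+1)` matrices (level `r = n+1`). -/
def Idx : ℕ → Type
  | 0 => Fin 2
  | n + 1 => Fin 2 × Idx n

instance Idx.fintype : (n : ℕ) → Fintype (Idx n)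
  | 0 => inferInstanceAs (Fintype (Fin 2))
  | n + 1 => letI := Idx.fintype n; inferInstanceAs (Fintype (Fin 2 × Idx n))

instance Idx.decEq : (n : ℕ) → DecidableEq (Idx n)
  | 0 => inferInstanceAs (DecidableEq (Fin 2))
  | n + 1 => letI := Idx.decEq n; inferInstanceAs (DecidableEq (Fin 2 × Idx n))

def A1 (x : ℝ) : Matrix (Fin 2) (Fin 2) ℝ := !![1, 0; 0, x]
def B1 (x : ℝ) : Matrix (Fin 2) (Fin 2) ℝ := !![0, x; 1, 0]
def C1 (x : ℝ) : Matrix (Fin 2) (Fin 2) ℝ := !![0, 1; x, 0]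
def D1 (x : ℝ) : Matrix (Fin 2) (Fin 2) ℝ := !![x, 0; 0, 1]

/-- The quadruple `(A_r, B_r, C_r, D_r)` at level `r = n+1`, via the coproduct recursion. -/
def ABCD (x : ℝ) : (n : ℕ) →
    (Matrix (Idx n) (Idx n) ℝ × Matrix (Idx n) (Idx n) ℝ ×
      Matrix (Idx n) (Idx n) ℝ × Matrix (Idx n) (Idx n) ℝ)
  | 0 => (A1 x, B1 x, C1 x, D1 x)
  | n + 1 =>
    let p := ABCD x n
    (A1 x ⊗ₖ p.1 + B1 x ⊗ₖ p.2.2.1,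
     A1 x ⊗ₖ p.2.1 + B1 x ⊗ₖ p.2.2.2,
     C1 x ⊗ₖ p.1 + D1 x ⊗ₖ p.2.2.1,
     D1 x ⊗ₖ p.2.2.2 + C1 x ⊗ₖ p.2.1)

def Amat (x : ℝ) (n : ℕ) : Matrix (Idx n) (Idx n) ℝ := (ABCD x n).1
def Bmat (x : ℝ) (n : ℕ) : Matrix (Idx n) (Idx n) ℝ := (ABCD x n).2.1
def Cmat (x : ℝ) (n : ℕ) : Matrix (Idx n) (Idx n) ℝ := (ABCD x n).2.2.1
def Dmat (x : ℝ) (n : ℕ) : Matrix (Idx n) (Idx n) ℝ := (ABCD x n).2.2.2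

def Kmat : Matrix (Fin 2) (Fin 2) ℝ := !![0, 1; 1, 0]

/-- `K_{(r)} = I_{2^{r-1}} ⊗ K` at level `r = n+1`. -/
def Kr : (n : ℕ) → Matrix (Idx n) (Idx n) ℝ
  | 0 => Kmat
  | n + 1 => (1 : Matrix (Fin 2) (Fin 2) ℝ) ⊗ₖ Kr n

/-- `K^{⊗r}` at level `r = n+1`. -/
def Kpow : (n : ℕ) → Matrix (Idx n) (Idx n) ℝ
  | 0 => Kmat
  | n + 1 => Kmat ⊗ₖ Kpow n

attribute [reducible] Idx

-- aux
def Tm (x : ℝ) (n : ℕ) : Fin 2 → Fin 2 → Matrix (Idx n) (Idx n) ℝ :=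
  ![![Amat x n, Bmat x n], ![Cmat x n, Dmat x n]]

lemma Tm_succ (x : ℝ) (n : ℕ) (i k : Fin 2) :
    Tm x (n+1) i k = ∑ m : Fin 2, (Tm x 0 i m) ⊗ₖ (Tm x n m k) := by
  fin_cases i <;> fin_cases k <;>
    simp [Tm, Fin.sum_univ_two, Amat, Bmat, Cmat, Dmat, ABCD] <;> abel

def YBRel (x x' : ℝ) (n : ℕ) : Prop :=
  ∀ i j k l : Fin 2,
    (1 - x*x') • (Tm x n i k * Tm x' n j l) + (x - x') • (Tm x n (1-i) k * Tm x' n (1-j) l)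
  = (1 - x*x') • (Tm x' n i k * Tm x n j l) + (x - x') • (Tm x' n i (1-k) * Tm x n j (1-l))

def T1 (x : ℝ) : Fin 2 → Fin 2 → Matrix (Fin 2) (Fin 2) ℝ :=
  ![![A1 x, B1 x], ![C1 x, D1 x]]

set_option maxHeartbeats 1000000 in
lemma base_rel (x x' : ℝ) : ∀ i j k l : Fin 2,
    (1 - x*x') • (T1 x i k * T1 x' j l) + (x - x') • (T1 x (1-i) k * T1 x' (1-j) l)
  = (1 - x*x') • (T1 x' i k * T1 x j l) + (x - x') • (T1 x' i (1-k) * T1 x j (1-l)) := by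
  simp only [Fin.forall_fin_two, show (1:Fin 2)-0=1 from rfl, show (1:Fin 2)-1=0 from rfl]
  repeat' apply And.intro
  all_goals
    · ext a b
      fin_cases a <;> fin_cases b <;>
        · simp only [T1, A1, B1, C1, D1, Fin.mk_zero, Fin.mk_one,
            Matrix.cons_val_zero, Matrix.cons_val_one, Matrix.head_cons,
            Matrix.add_apply, Matrix.smul_apply, Matrix.mul_apply,
            Fin.sum_univ_two, smul_eq_mul, Matrix.cons_val', Matrix.empty_val',
            Matrix.cons_val_fin_one, Matrix.of_apply, Matrix.vecHead, Matrix.vecTail]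
          ring

lemma ybrel_zero (x x' : ℝ) : YBRel x x' 0 := fun i j k l => base_rel x x' i j k l

set_option maxHeartbeats 1600000 in
lemma ybrel_succ (x x' : ℝ) (n : ℕ) (ih : YBRel x x' n) : YBRel x x' (n + 1) := by
  intro i j k l
  have h10 : (1:Fin 2) - 0 = 1 := rfl
  have h11 : (1:Fin 2) - 1 = 0 := rfl
  calc
    (1-x*x') • (Tm x (n+1) i k * Tm x' (n+1) j l)
        + (x-x') • (Tm x (n+1) (1-i) k * Tm x' (n+1) (1-j) l)
      = ∑ m : Fin 2, ∑ s : Fin 2,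
          ((1-x*x') • (Tm x 0 i m * Tm x' 0 j s)
            + (x-x') • (Tm x 0 (1-i) m * Tm x' 0 (1-j) s)) ⊗ₖ
            (Tm x n m k * Tm x' n s l) := by
        simp only [Tm_succ, Finset.sum_mul_sum, Matrix.mul_kronecker_mul, Finset.smul_sum,
          Matrix.add_kronecker, Matrix.smul_kronecker, Finset.sum_add_distrib]
    _ = ∑ m : Fin 2, ∑ s : Fin 2,
          ((1-x*x') • (Tm x' 0 i m * Tm x 0 j s)
            + (x-x') • (Tm x' 0 i (1-m) * Tm x 0 j (1-s))) ⊗ₖ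
            (Tm x n m k * Tm x' n s l) :=
        Finset.sum_congr rfl fun m _ => Finset.sum_congr rfl fun s _ =>
          congrArg (fun M => M ⊗ₖ (Tm x n m k * Tm x' n s l)) (ybrel_zero x x' i j m s)
    _ = ∑ m : Fin 2, ∑ s : Fin 2,
          (Tm x' 0 i m * Tm x 0 j s) ⊗ₖ
            ((1-x*x') • (Tm x n m k * Tm x' n s l)
              + (x-x') • (Tm x n (1-m) k * Tm x' n (1-s) l)) := by
        simp only [Fin.sum_univ_two, h10, h11, Matrix.add_kronecker, Matrix.kronecker_add,
          Matrix.smul_kronecker, Matrix.kronecker_smul]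
        abel
    _ = ∑ m : Fin 2, ∑ s : Fin 2,
          (Tm x' 0 i m * Tm x 0 j s) ⊗ₖ
            ((1-x*x') • (Tm x' n m k * Tm x n s l)
              + (x-x') • (Tm x' n m (1-k) * Tm x n s (1-l))) :=
        Finset.sum_congr rfl fun m _ => Finset.sum_congr rfl fun s _ =>
          congrArg (fun M => (Tm x' 0 i m * Tm x 0 j s) ⊗ₖ M) (ih m s k l)
    _ = (1-x*x') • (Tm x' (n+1) i k * Tm x (n+1) j l)
        + (x-x') • (Tm x' (n+1) i (1-k) * Tm x (n+1) j (1-l)) := by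
        simp only [Tm_succ, Finset.sum_mul_sum, Matrix.mul_kronecker_mul, Finset.smul_sum,
          Matrix.kronecker_add, Matrix.kronecker_smul, Finset.sum_add_distrib]

lemma ybrel (x x' : ℝ) (n : ℕ) : YBRel x x' n := by
  induction n with
  | zero => exact ybrel_zero x x'
  | succ n ih => exact ybrel_succ x x' n ih

lemma TmA (y : ℝ) (n : ℕ) : Tm y n 0 0 = Amat y n := rfl
lemma TmB (y : ℝ) (n : ℕ) : Tm y n 0 1 = Bmat y n := rfl
lemma TmC (y : ℝ) (n : ℕ) : Tm y n 1 0 = Cmat y n := rfl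
lemma TmD (y : ℝ) (n : ℕ) : Tm y n 1 1 = Dmat y n := rfl

lemma generic (x x' : ℝ) (n : ℕ)
    (hab : (1 - x*x') * (1 - x*x') - (x - x') * (x - x') ≠ 0) :
    ((Amat x n + Dmat x n) * (Amat x' n + Dmat x' n)
        = (Amat x' n + Dmat x' n) * (Amat x n + Dmat x n)) ∧
    ((Amat x n - Dmat x n) * (Amat x' n - Dmat x' n)
        = (Amat x' n - Dmat x' n) * (Amat x n - Dmat x n)) ∧
    ((Amat x n + Dmat x n) * (Bmat x' n + Cmat x' n)
        = (Amat x' n + Dmat x' n) * (Bmat x n + Cmat x n)) ∧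
    ((Amat x n - Dmat x n) * (Bmat x' n - Cmat x' n)
        = (Amat x' n - Dmat x' n) * (Bmat x n - Cmat x n)) := by
  have r := ybrel x x' n
  have h10 : (1:Fin 2) - 0 = 1 := rfl
  have h11 : (1:Fin 2) - 1 = 0 := rfl
  set a : ℝ := 1 - x*x' with ha
  set b : ℝ := x - x' with hb
  set A := Amat x n; set B := Bmat x n; set C := Cmat x n; set D := Dmat x n
  set A' := Amat x' n; set B' := Bmat x' n; set C' := Cmat x' n; set D' := Dmat x' n
  have e1 := r 0 0 0 0; have e2 := r 1 1 1 1; have e3 := r 0 1 0 1; have e4 := r 1 0 1 0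
  have e5 := r 0 0 1 1; have e6 := r 1 1 0 0; have e7 := r 0 1 1 0; have e8 := r 1 0 0 1
  have e9 := r 0 0 0 1; have e10 := r 1 1 1 0; have e11 := r 0 1 0 0; have e12 := r 1 0 1 1
  have e13 := r 0 0 1 0; have e14 := r 1 1 0 1; have e15 := r 0 1 1 1; have e16 := r 1 0 0 0
  simp only [h10, h11, TmA, TmB, TmC, TmD] at e1 e2 e3 e4 e5 e6 e7 e8 e9 e10 e11 e12 e13 e14 e15 e16
  refine ⟨?_, ?_, ?_, ?_⟩
  · -- (A+D)(A'+D') = (A'+D')(A+D)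
    have h1 : a • (A*A' + D*D' + A*D' + D*A' - (A'*A + D'*D + A'*D + D'*A))
        + b • (C*C' + B*B' + C*B' + B*C' - (B'*B + C'*C + B'*C + C'*B)) = 0 := by
      linear_combination (norm := module) e1 + e2 + e3 + e4
    have h2 : a • (B*B' + C*C' + B*C' + C*B' - (B'*B + C'*C + B'*C + C'*B))
        + b • (D*D' + A*A' + D*A' + A*D' - (A'*A + D'*D + A'*D + D'*A)) = 0 := by
      linear_combination (norm := module) e5 + e6 + e7 + e8
    have p1 : (a*a - b*b) • (A*A' + D*D' + A*D' + D*A' - (A'*A + D'*D + A'*D + D'*A)) = 0 := by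
      linear_combination (norm := module) a • h1 - b • h2
    have hz : (A*A' + D*D' + A*D' + D*A' - (A'*A + D'*D + A'*D + D'*A)) = 0 :=
      (smul_eq_zero.mp p1).resolve_left hab
    have : (A + D) * (A' + D') - (A' + D') * (A + D)
        = A*A' + D*D' + A*D' + D*A' - (A'*A + D'*D + A'*D + D'*A) := by noncomm_ring
    exact sub_eq_zero.mp (this.trans hz)
  · have h1 : a • (A*A' + D*D' - A*D' - D*A' - (A'*A + D'*D - A'*D - D'*A))
        + b • (C*C' + B*B' - C*B' - B*C' - (B'*B + C'*C - B'*C - C'*B)) = 0 := by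
      linear_combination (norm := module) e1 + e2 - e3 - e4
    have h2 : a • (B*B' + C*C' - B*C' - C*B' - (B'*B + C'*C - B'*C - C'*B))
        + b • (D*D' + A*A' - D*A' - A*D' - (A'*A + D'*D - A'*D - D'*A)) = 0 := by
      linear_combination (norm := module) e5 + e6 - e7 - e8
    have p1 : (a*a - b*b) • (A*A' + D*D' - A*D' - D*A' - (A'*A + D'*D - A'*D - D'*A)) = 0 := by
      linear_combination (norm := module) a • h1 - b • h2
    have hz : (A*A' + D*D' - A*D' - D*A' - (A'*A + D'*D - A'*D - D'*A)) = 0 :=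
      (smul_eq_zero.mp p1).resolve_left hab
    have : (A - D) * (A' - D') - (A' - D') * (A - D)
        = A*A' + D*D' - A*D' - D*A' - (A'*A + D'*D - A'*D - D'*A) := by noncomm_ring
    exact sub_eq_zero.mp (this.trans hz)
  · have h3 : a • (A*B' + D*C' + A*C' + D*B' - (A'*B + D'*C + A'*C + D'*B))
        + b • (C*D' + B*A' + C*A' + B*D' - (B'*A + C'*D + B'*D + C'*A)) = 0 := by
      linear_combination (norm := module) e9 + e10 + e11 + e12
    have h4 : a • (B*A' + C*D' + B*D' + C*A' - (B'*A + C'*D + B'*D + C'*A))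
        + b • (D*C' + A*B' + D*B' + A*C' - (A'*B + D'*C + A'*C + D'*B)) = 0 := by
      linear_combination (norm := module) e13 + e14 + e15 + e16
    have p3 : (a*a - b*b) • (A*B' + D*C' + A*C' + D*B' - (A'*B + D'*C + A'*C + D'*B)) = 0 := by
      linear_combination (norm := module) a • h3 - b • h4
    have hz : (A*B' + D*C' + A*C' + D*B' - (A'*B + D'*C + A'*C + D'*B)) = 0 :=
      (smul_eq_zero.mp p3).resolve_left hab
    have : (A + D) * (B' + C') - (A' + D') * (B + C)
        = A*B' + D*C' + A*C' + D*B' - (A'*B + D'*C + A'*C + D'*B) := by noncomm_ring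
    exact sub_eq_zero.mp (this.trans hz)
  · have h3 : a • (A*B' + D*C' - A*C' - D*B' - (A'*B + D'*C - A'*C - D'*B))
        + b • (C*D' + B*A' - C*A' - B*D' - (B'*A + C'*D - B'*D - C'*A)) = 0 := by
      linear_combination (norm := module) e9 + e10 - e11 - e12
    have h4 : a • (B*A' + C*D' - B*D' - C*A' - (B'*A + C'*D - B'*D - C'*A))
        + b • (D*C' + A*B' - D*B' - A*C' - (A'*B + D'*C - A'*C - D'*B)) = 0 := by
      linear_combination (norm := module) e13 + e14 - e15 - e16
    have p4 : (a*a - b*b) • (A*B' + D*C' - A*C' - D*B' - (A'*B + D'*C - A'*C - D'*B)) = 0 := by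
      linear_combination (norm := module) a • h3 - b • h4
    have hz : (A*B' + D*C' - A*C' - D*B' - (A'*B + D'*C - A'*C - D'*B)) = 0 :=
      (smul_eq_zero.mp p4).resolve_left hab
    have : (A - D) * (B' - C') - (A' - D') * (B - C)
        = A*B' + D*C' - A*C' - D*B' - (A'*B + D'*C - A'*C - D'*B) := by noncomm_ring
    exact sub_eq_zero.mp (this.trans hz)

lemma cont_kron {X : Type*} [TopologicalSpace X] {l m p q : Type*}
    {f : X → Matrix l m ℝ} {g : X → Matrix p q ℝ}
    (hf : Continuous f) (hg : Continuous g) :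
    Continuous fun x => f x ⊗ₖ g x :=
  continuous_matrix fun i j => (hf.matrix_elem i.1 j.1).mul (hg.matrix_elem i.2 j.2)

lemma contABCD (n : ℕ) : Continuous fun y : ℝ => ABCD y n := by
  induction n with
  | zero =>
    have hA : Continuous A1 := continuous_matrix fun i j => by
      fin_cases i <;> fin_cases j <;> simp [A1] <;> fun_prop
    have hB : Continuous B1 := continuous_matrix fun i j => by
      fin_cases i <;> fin_cases j <;> simp [B1] <;> fun_prop
    have hC : Continuous C1 := continuous_matrix fun i j => by
      fin_cases i <;> fin_cases j <;> simp [C1] <;> fun_prop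
    have hD : Continuous D1 := continuous_matrix fun i j => by
      fin_cases i <;> fin_cases j <;> simp [D1] <;> fun_prop
    exact hA.prodMk (hB.prodMk (hC.prodMk hD))
  | succ n ih =>
    have hA : Continuous A1 := continuous_matrix fun i j => by
      fin_cases i <;> fin_cases j <;> simp [A1] <;> fun_prop
    have hB : Continuous B1 := continuous_matrix fun i j => by
      fin_cases i <;> fin_cases j <;> simp [B1] <;> fun_prop
    have hC : Continuous C1 := continuous_matrix fun i j => by
      fin_cases i <;> fin_cases j <;> simp [C1] <;> fun_prop
    have hD : Continuous D1 := continuous_matrix fun i j => by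
      fin_cases i <;> fin_cases j <;> simp [D1] <;> fun_prop
    have h1 : Continuous fun y : ℝ => (ABCD y n).1 := ih.fst
    have h2 : Continuous fun y : ℝ => (ABCD y n).2.1 := ih.snd.fst
    have h3 : Continuous fun y : ℝ => (ABCD y n).2.2.1 := ih.snd.snd.fst
    have h4 : Continuous fun y : ℝ => (ABCD y n).2.2.2 := ih.snd.snd.snd
    exact ((cont_kron hA h1).add (cont_kron hB h3)).prodMk
      (((cont_kron hA h2).add (cont_kron hB h4)).prodMk
        (((cont_kron hC h1).add (cont_kron hD h3)).prodMk
          ((cont_kron hD h4).add (cont_kron hC h2))))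

lemma contAmat (n : ℕ) : Continuous fun y : ℝ => Amat y n := (contABCD n).fst
lemma contBmat (n : ℕ) : Continuous fun y : ℝ => Bmat y n := (contABCD n).snd.fst
lemma contCmat (n : ℕ) : Continuous fun y : ℝ => Cmat y n := (contABCD n).snd.snd.fst
lemma contDmat (n : ℕ) : Continuous fun y : ℝ => Dmat y n := (contABCD n).snd.snd.snd

lemma dense_good : Dense {q : ℝ × ℝ |
    (1 - q.1*q.2) * (1 - q.1*q.2) - (q.1 - q.2) * (q.1 - q.2) ≠ 0} := by
  have fact : ∀ y : ℝ, ((1:ℝ) - y^2 ≠ 0) ↔ (y ≠ 1 ∧ y ≠ -1) := by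
    intro y
    constructor
    · intro h
      refine ⟨fun hy => ?_, fun hy => ?_⟩ <;> (subst hy; norm_num at h)
    · rintro ⟨hy1, hy2⟩ hz
      have : (1 - y) * (1 + y) = 0 := by nlinarith [hz]
      rcases mul_eq_zero.mp this with h | h
      · exact hy1 (by linarith)
      · exact hy2 (by linarith)
  have h1 : Dense {y : ℝ | (1:ℝ) - y^2 ≠ 0} := by
    have : {y : ℝ | (1:ℝ) - y^2 ≠ 0} = {(1:ℝ)}ᶜ ∩ {(-1:ℝ)}ᶜ := by
      ext y
      simp only [Set.mem_setOf_eq, Set.mem_inter_iff, Set.mem_compl_iff,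
        Set.mem_singleton_iff, fact y]
    rw [this]
    exact (dense_compl_singleton (1:ℝ)).inter_of_isOpen_left
      (dense_compl_singleton (-1:ℝ)) isOpen_compl_singleton
  have heq : {q : ℝ × ℝ |
      (1 - q.1*q.2) * (1 - q.1*q.2) - (q.1 - q.2) * (q.1 - q.2) ≠ 0}
      = {y : ℝ | (1:ℝ) - y^2 ≠ 0} ×ˢ {y : ℝ | (1:ℝ) - y^2 ≠ 0} := by
    ext q
    simp only [Set.mem_setOf_eq, Set.mem_prod]
    rw [show (1 - q.1*q.2) * (1 - q.1*q.2) - (q.1 - q.2) * (q.1 - q.2)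
        = (1 - q.1^2) * (1 - q.2^2) by ring, mul_ne_zero_iff]
  rw [heq]
  exact h1.prod h1

theorem RTT_block_identities (x x' : ℝ) (n : ℕ) :
    ((Amat x n + Dmat x n) * (Amat x' n + Dmat x' n)
        = (Amat x' n + Dmat x' n) * (Amat x n + Dmat x n)) ∧
    ((Amat x n - Dmat x n) * (Amat x' n - Dmat x' n)
        = (Amat x' n - Dmat x' n) * (Amat x n - Dmat x n)) ∧
    ((Amat x n + Dmat x n) * (Bmat x' n + Cmat x' n)
        = (Amat x' n + Dmat x' n) * (Bmat x n + Cmat x n)) ∧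
    ((Amat x n - Dmat x n) * (Bmat x' n - Cmat x' n)
        = (Amat x' n - Dmat x' n) * (Bmat x n - Cmat x n)) := by
  have cA1 := (contAmat n).comp (continuous_fst : Continuous fun q : ℝ × ℝ => q.1)
  have cA2 := (contAmat n).comp (continuous_snd : Continuous fun q : ℝ × ℝ => q.2)
  have cB1 := (contBmat n).comp (continuous_fst : Continuous fun q : ℝ × ℝ => q.1)
  have cB2 := (contBmat n).comp (continuous_snd : Continuous fun q : ℝ × ℝ => q.2)
  have cC1 := (contCmat n).comp (continuous_fst : Continuous fun q : ℝ × ℝ => q.1)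
  have cC2 := (contCmat n).comp (continuous_snd : Continuous fun q : ℝ × ℝ => q.2)
  have cD1 := (contDmat n).comp (continuous_fst : Continuous fun q : ℝ × ℝ => q.1)
  have cD2 := (contDmat n).comp (continuous_snd : Continuous fun q : ℝ × ℝ => q.2)
  refine ⟨?_, ?_, ?_, ?_⟩
  · have h : (fun q : ℝ × ℝ => (Amat q.1 n + Dmat q.1 n) * (Amat q.2 n + Dmat q.2 n))
        = fun q : ℝ × ℝ => (Amat q.2 n + Dmat q.2 n) * (Amat q.1 n + Dmat q.1 n) :=
      Continuous.ext_on dense_good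
        ((cA1.add cD1).matrix_mul (cA2.add cD2))
        ((cA2.add cD2).matrix_mul (cA1.add cD1))
        (fun q hq => (generic q.1 q.2 n hq).1)
    exact congrFun h (x, x')
  · have h : (fun q : ℝ × ℝ => (Amat q.1 n - Dmat q.1 n) * (Amat q.2 n - Dmat q.2 n))
        = fun q : ℝ × ℝ => (Amat q.2 n - Dmat q.2 n) * (Amat q.1 n - Dmat q.1 n) :=
      Continuous.ext_on dense_good
        ((cA1.sub cD1).matrix_mul (cA2.sub cD2))
        ((cA2.sub cD2).matrix_mul (cA1.sub cD1))
        (fun q hq => (generic q.1 q.2 n hq).2.1)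
    exact congrFun h (x, x')
  · have h : (fun q : ℝ × ℝ => (Amat q.1 n + Dmat q.1 n) * (Bmat q.2 n + Cmat q.2 n))
        = fun q : ℝ × ℝ => (Amat q.2 n + Dmat q.2 n) * (Bmat q.1 n + Cmat q.1 n) :=
      Continuous.ext_on dense_good
        ((cA1.add cD1).matrix_mul (cB2.add cC2))
        ((cA2.add cD2).matrix_mul (cB1.add cC1))
        (fun q hq => (generic q.1 q.2 n hq).2.2.1)
    exact congrFun h (x, x')
  · have h : (fun q : ℝ × ℝ => (Amat q.1 n - Dmat q.1 n) * (Bmat q.2 n - Cmat q.2 n))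
        = fun q : ℝ × ℝ => (Amat q.2 n - Dmat q.2 n) * (Bmat q.1 n - Cmat q.1 n) :=
      Continuous.ext_on dense_good
        ((cA1.sub cD1).matrix_mul (cB2.sub cC2))
        ((cA2.sub cD2).matrix_mul (cB1.sub cC1))
        (fun q hq => (generic q.1 q.2 n hq).2.2.2)
    exact congrFun h (x, x')
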